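/- For any CPTP map Φ and q > 1, S_q^map(Φ) ≥ F_min · ln(N/Λ_Φ) + G_min · S_q^rec(Φ), where F_min = min(q/(q−1), 2) and G_min = min(q/(2(q−1)), 2(q−1)/q). -/

import Mathlib

open Matrix
open scoped BigOperators Kronecker ComplexOrder

noncomputable section

/-- Singular values of a square complex matrix: square roots of eigenvalues of `X * Xᴴ`. -/
def singularValues {n : Type*} [Fintype n] [DecidableEq n] (X : Matrix n n ℂ) : n → ℝ :=
  fun i => Real.sqrt ((Matrix.posSemidef_self_mul_conjTranspose X).1.eigenvalues i)

/-- Shannon entropy of the normalization of a nonnegative vector. -/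
def shannonH {ι : Type*} [Fintype ι] (v : ι → ℝ) : ℝ :=
  -∑ i, (v i / ∑ j, v j) * Real.log (v i / ∑ j, v j)

/-- Rényi entropy of order `q` of the normalization of a nonnegative vector. -/
def renyiH {ι : Type*} [Fintype ι] (q : ℝ) (v : ι → ℝ) : ℝ :=
  (1 / (1 - q)) * Real.log (∑ i, (v i / ∑ j, v j) ^ q)

/-- Unnormalized (von Neumann–type) entropy of the singular value vector. -/
def vnEntropy {n : Type*} [Fintype n] [DecidableEq n] (M : Matrix n n ℂ) : ℝ :=
  -∑ i, singularValues M i * Real.log (singularValues M i)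

/-- A quantum channel: completely positive (Kraus form) and trace preserving. -/
def IsCPTP {N : ℕ} (Φ : Matrix (Fin N) (Fin N) ℂ →ₗ[ℂ] Matrix (Fin N) (Fin N) ℂ) : Prop :=
  ∃ (k : ℕ) (A : Fin k → Matrix (Fin N) (Fin N) ℂ),
    (∀ ρ, Φ ρ = ∑ i, A i * ρ * (A i)ᴴ) ∧ (∑ i, (A i)ᴴ * A i = 1)

/-- Density matrix predicate. -/
def IsDensityMatrix {n : Type*} [Fintype n] [DecidableEq n] (ρ : Matrix n n ℂ) : Prop :=
  ρ.PosSemidef ∧ ρ.trace = 1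

/-- The Choi (dynamical) matrix of a linear map on matrices. -/
def choiMatrix {N : ℕ} (Φ : Matrix (Fin N) (Fin N) ℂ →ₗ[ℂ] Matrix (Fin N) (Fin N) ℂ) :
    Matrix (Fin N × Fin N) (Fin N × Fin N) ℂ :=
  fun p q => Φ (Matrix.single p.2 q.2 1) p.1 q.1

/-- The superoperator matrix of a linear map on matrices. -/
def superMatrix {N : ℕ} (Φ : Matrix (Fin N) (Fin N) ℂ →ₗ[ℂ] Matrix (Fin N) (Fin N) ℂ) :
    Matrix (Fin N × Fin N) (Fin N × Fin N) ℂ :=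
  fun p q => Φ (Matrix.single q.1 q.2 1) p.1 p.2

/-- Hilbert–Schmidt norm of a matrix. -/
def hsNorm {n : Type*} [Fintype n] [DecidableEq n] (M : Matrix n n ℂ) : ℝ :=
  Real.sqrt ((M * Mᴴ).trace.re)

/-- Largest singular value of the superoperator of `Φ`, as the operator norm w.r.t. HS norm. -/
def sigma1 {N : ℕ} (Φ : Matrix (Fin N) (Fin N) ℂ →ₗ[ℂ] Matrix (Fin N) (Fin N) ℂ) : ℝ :=
  sSup {r : ℝ | ∃ M : Matrix (Fin N) (Fin N) ℂ, hsNorm M = 1 ∧ r = hsNorm (Φ M)}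

/-- Sum of the (at most) `m` largest entries of a nonnegative vector. -/
def partialMax {ι : Type*} [Fintype ι] (v : ι → ℝ) (m : ℕ) : ℝ :=
  sSup {t : ℝ | ∃ s : Finset ι, s.card ≤ m ∧ t = ∑ i ∈ s, v i}

/-- `Majorizes w v` means `v ≺ w` (for nonnegative vectors, possibly of different lengths). -/
def Majorizes {ι κ : Type*} [Fintype ι] [Fintype κ] (w : ι → ℝ) (v : κ → ℝ) : Prop :=
  (∑ i, v i = ∑ i, w i) ∧ ∀ m : ℕ, partialMax v m ≤ partialMax w m


section Scalar
variable {ι : Type*} [Fintype ι]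

/-- superadditivity of rpow : `∑ w^t ≤ (∑ w)^t` for `t ≥ 1`. -/
lemma aux_sum_rpow_le (w : ι → ℝ) (hw : ∀ i, 0 ≤ w i) {t : ℝ} (ht : 1 ≤ t) :
    ∑ i, w i ^ t ≤ (∑ i, w i) ^ t := by
  have hS : 0 ≤ ∑ i, w i := Finset.sum_nonneg fun i _ => hw i
  rcases eq_or_lt_of_le hS with h0 | hpos
  · have hall : ∀ i ∈ Finset.univ, w i = 0 :=
      Finset.sum_eq_zero_iff_of_nonneg (fun i _ => hw i) |>.mp h0.symm
    have ht0 : t ≠ 0 := by positivity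
    rw [← h0, Real.zero_rpow ht0]
    apply le_of_eq
    apply Finset.sum_eq_zero
    intro i hi
    rw [hall i hi, Real.zero_rpow ht0]
  · calc ∑ i, w i ^ t ≤ ∑ i, (∑ j, w j) ^ (t - 1) * w i := by
          apply Finset.sum_le_sum
          intro i _
          have h1 : w i ^ t = w i ^ (t - 1) * w i := by
            have : w i ^ t = w i ^ ((t - 1) + 1) := by norm_num
            rw [this, Real.rpow_add' (hw i) (by norm_num; linarith), Real.rpow_one]
          rw [h1]
          apply mul_le_mul_of_nonneg_right _ (hw i)
          exact Real.rpow_le_rpow (hw i)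
            (Finset.single_le_sum (fun j _ => hw j) (Finset.mem_univ i)) (by linarith)
      _ = (∑ i, w i) ^ t := by
          rw [← Finset.mul_sum]
          have h2 : (∑ i, w i) ^ t = (∑ i, w i) ^ (t - 1) * (∑ i, w i) := by
            have : (∑ i, w i) ^ t = (∑ i, w i) ^ ((t - 1) + 1) := by norm_num
            rw [this, Real.rpow_add hpos, Real.rpow_one]
          rw [h2]

end Scalar

section Prob
variable {ι : Type*} [Fintype ι] (v : ι → ℝ) (hv : ∀ i, 0 ≤ v i) (hS : 0 < ∑ i, v i)

namespace RenyiAux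

/-- the normalized vector -/
def P (v : ι → ℝ) : ι → ℝ := fun i => v i / ∑ j, v j

include hv hS

lemma P_nonneg : ∀ i, 0 ≤ P v i := fun i => div_nonneg (hv i) hS.le

lemma P_sum : ∑ i, P v i = 1 := by
  simp only [P, ← Finset.sum_div]
  exact div_self hS.ne'

lemma P_le_one : ∀ i, P v i ≤ 1 := fun i =>
  (div_le_one hS).mpr (Finset.single_le_sum (fun j _ => hv j) (Finset.mem_univ i))

lemma exists_P_pos : ∃ i, 0 < P v i := by
  by_contra h
  push_neg at h
  have : ∑ i, P v i = 0 := le_antisymm (Finset.sum_nonpos fun i _ => h i)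
    (Finset.sum_nonneg fun i _ => P_nonneg v hv hS i)
  rw [P_sum v hv hS] at this; norm_num at this

lemma sum_P_rpow_pos (q : ℝ) : 0 < ∑ i, P v i ^ q := by
  obtain ⟨i, hi⟩ := exists_P_pos v hv hS
  have h1 : ∀ j ∈ Finset.univ, (0:ℝ) ≤ P v j ^ q := fun j _ =>
    Real.rpow_nonneg (P_nonneg v hv hS j) q
  calc (0:ℝ) < P v i ^ q := Real.rpow_pos_of_pos hi q
    _ ≤ _ := Finset.single_le_sum h1 (Finset.mem_univ i)

lemma renyiH_eq (q : ℝ) : renyiH q v = (1 / (1 - q)) * Real.log (∑ i, P v i ^ q) := rfl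

end RenyiAux

open RenyiAux

include hv hS

/-- `1 < q ≤ 2` : `renyiH 2 v ≤ renyiH q v`. -/
lemma renyi_two_le {q : ℝ} (hq : 1 < q) (hq2 : q ≤ 2) : renyiH 2 v ≤ renyiH q v := by
  have hP0 := P_nonneg v hv hS
  have hAq := sum_P_rpow_pos v hv hS q
  have hA2 := sum_P_rpow_pos v hv hS 2
  -- key : ∑ P^q ≤ (∑ P^2)^(q-1)
  have key : ∑ i, P v i ^ q ≤ (∑ i, P v i ^ (2:ℝ)) ^ (q - 1) := by
    rcases eq_or_lt_of_le hq2 with h2 | hlt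
    · subst h2; norm_num
    · have hconj : Real.HolderConjugate (1/(q-1)) (1/(2-q)) := by
        rw [Real.holderConjugate_iff]; constructor
        · rw [lt_div_iff₀ (by linarith)]; linarith
        · rw [one_div, one_div, inv_inv, inv_inv]; ring
      have H := Real.inner_le_Lp_mul_Lq_of_nonneg Finset.univ hconj
        (f := fun i => P v i ^ (2*(q-1))) (g := fun i => P v i ^ (2-q))
        (fun i _ => Real.rpow_nonneg (hP0 i) _) (fun i _ => Real.rpow_nonneg (hP0 i) _)
      have e1 : ∀ i, P v i ^ (2*(q-1)) * P v i ^ (2-q) = P v i ^ q := by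
        intro i
        rw [← Real.rpow_add' (hP0 i) (by intro h; apply hq.ne'; linarith)]
        ring_nf
      have hq1ne : q - 1 ≠ 0 := by intro h; apply hq.ne'; linarith
      have h2qne : 2 - q ≠ 0 := by intro h; apply hlt.ne; linarith
      have e2 : ∀ i, (P v i ^ (2*(q-1))) ^ ((1:ℝ)/(q-1)) = P v i ^ (2:ℝ) := by
        intro i
        rw [← Real.rpow_mul (hP0 i)]
        congr 1
        field_simp
      have e3 : ∀ i, (P v i ^ (2-q)) ^ ((1:ℝ)/(2-q)) = P v i ^ (1:ℝ) := by
        intro i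
        rw [← Real.rpow_mul (hP0 i)]
        congr 1
        field_simp
      simp only [e1, e2, e3, one_div_one_div] at H
      calc ∑ i, P v i ^ q ≤ (∑ i, P v i ^ (2:ℝ)) ^ (q-1) *
            (∑ i, P v i ^ (1:ℝ)) ^ (2-q) := H
        _ = (∑ i, P v i ^ (2:ℝ)) ^ (q-1) := by
            simp only [Real.rpow_one]
            rw [P_sum v hv hS, Real.one_rpow, mul_one]
  have hlog : Real.log (∑ i, P v i ^ q) ≤ (q - 1) * Real.log (∑ i, P v i ^ (2:ℝ)) := by
    calc Real.log (∑ i, P v i ^ q) ≤ Real.log ((∑ i, P v i ^ (2:ℝ)) ^ (q-1)) :=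
          Real.log_le_log hAq key
      _ = (q - 1) * Real.log (∑ i, P v i ^ (2:ℝ)) := Real.log_rpow hA2 _
  rw [renyiH_eq v hv hS, renyiH_eq v hv hS]
  set L1 := Real.log (∑ i, P v i ^ q)
  set L2 := Real.log (∑ i, P v i ^ (2:ℝ))
  have hq1 : (0:ℝ) < q - 1 := by linarith
  have h1q : (1:ℝ) - q ≠ 0 := by intro h; apply hq.ne'; linarith
  have hrw : (1:ℝ)/(1-q) * L1 = -(L1/(q-1)) := by
    field_simp
    ring
  have hrw2 : (1:ℝ)/(1-(2:ℝ)) * L2 = -L2 := by norm_num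
  rw [hrw, hrw2]
  have : L1 / (q-1) ≤ L2 := (div_le_iff₀ hq1).mpr (by linarith)
  linarith



/-- `1 < q ≤ 2` : `(2(q-1)/q) * renyiH q v ≤ renyiH 2 v`. -/
lemma renyi_half2_le {q : ℝ} (hq : 1 < q) (hq2 : q ≤ 2) :
    2 * (q - 1) / q * renyiH q v ≤ renyiH 2 v := by
  have hP0 := P_nonneg v hv hS
  have hAq := sum_P_rpow_pos v hv hS q
  have hA2 := sum_P_rpow_pos v hv hS 2
  have hq0 : (0:ℝ) < q := by linarith
  -- key : ∑ P^2 ≤ (∑ P^q)^(2/q)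
  have key : ∑ i, P v i ^ (2:ℝ) ≤ (∑ i, P v i ^ q) ^ (2/q) := by
    have H := aux_sum_rpow_le (fun i => P v i ^ q)
      (fun i => Real.rpow_nonneg (hP0 i) q) (t := 2/q)
      ((one_le_div hq0).mpr (by linarith))
    calc ∑ i, P v i ^ (2:ℝ) = ∑ i, (P v i ^ q) ^ ((2:ℝ)/q) := by
          apply Finset.sum_congr rfl
          intro i _
          rw [← Real.rpow_mul (hP0 i)]
          congr 1
          field_simp
      _ ≤ _ := H
  have hlog : Real.log (∑ i, P v i ^ (2:ℝ)) ≤ (2/q) * Real.log (∑ i, P v i ^ q) := by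
    calc Real.log (∑ i, P v i ^ (2:ℝ)) ≤ Real.log ((∑ i, P v i ^ q) ^ ((2:ℝ)/q)) :=
          Real.log_le_log hA2 key
      _ = _ := Real.log_rpow hAq _
  rw [renyiH_eq v hv hS, renyiH_eq v hv hS]
  set L1 := Real.log (∑ i, P v i ^ q)
  set L2 := Real.log (∑ i, P v i ^ (2:ℝ))
  have h1q : (1:ℝ) - q ≠ 0 := by intro h; apply hq.ne'; linarith
  have hrw : 2 * (q - 1) / q * ((1:ℝ)/(1-q) * L1) = -(2/q * L1) := by
    field_simp
    ring
  have hrw2 : (1:ℝ)/(1-(2:ℝ)) * L2 = -L2 := by norm_num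
  rw [hrw, hrw2]
  linarith

/-- `2 ≤ q` : `(q/(2(q-1))) * renyiH 2 v ≤ renyiH q v`. -/
lemma renyi_ge2_a {q : ℝ} (hq2 : 2 ≤ q) :
    q / (2 * (q - 1)) * renyiH 2 v ≤ renyiH q v := by
  have hq : (1:ℝ) < q := by linarith
  have hP0 := P_nonneg v hv hS
  have hAq := sum_P_rpow_pos v hv hS q
  have hA2 := sum_P_rpow_pos v hv hS 2
  -- key : ∑ P^q ≤ (∑ P^2)^(q/2)
  have key : ∑ i, P v i ^ q ≤ (∑ i, P v i ^ (2:ℝ)) ^ (q/2) := by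
    have H := aux_sum_rpow_le (fun i => P v i ^ (2:ℝ))
      (fun i => Real.rpow_nonneg (hP0 i) 2) (t := q/2) (by linarith)
    calc ∑ i, P v i ^ q = ∑ i, (P v i ^ (2:ℝ)) ^ (q/(2:ℝ)) := by
          apply Finset.sum_congr rfl
          intro i _
          rw [← Real.rpow_mul (hP0 i)]
          congr 1
          field_simp
      _ ≤ _ := H
  have hlog : Real.log (∑ i, P v i ^ q) ≤ (q/2) * Real.log (∑ i, P v i ^ (2:ℝ)) := by
    calc Real.log (∑ i, P v i ^ q) ≤ Real.log ((∑ i, P v i ^ (2:ℝ)) ^ (q/(2:ℝ))) :=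
          Real.log_le_log hAq key
      _ = _ := Real.log_rpow hA2 _
  rw [renyiH_eq v hv hS, renyiH_eq v hv hS]
  set L1 := Real.log (∑ i, P v i ^ q)
  set L2 := Real.log (∑ i, P v i ^ (2:ℝ))
  have h1q : (1:ℝ) - q ≠ 0 := by intro h; apply hq.ne'; linarith
  have hq1 : (0:ℝ) < q - 1 := by linarith
  have hrw : (1:ℝ)/(1-q) * L1 = -(L1/(q-1)) := by
    field_simp; ring
  have hrw2 : q / (2*(q-1)) * ((1:ℝ)/(1-(2:ℝ)) * L2) = -(q/2 * L2 / (q-1)) := by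
    field_simp; ring
  rw [hrw, hrw2]
  have h3 : L1 / (q-1) ≤ q/2 * L2 / (q-1) := by gcongr
  linarith

/-- `2 ≤ q` : `renyiH q v ≤ renyiH 2 v`. -/
lemma renyi_ge2_b {q : ℝ} (hq2 : 2 ≤ q) : renyiH q v ≤ renyiH 2 v := by
  have hq : (1:ℝ) < q := by linarith
  have hP0 := P_nonneg v hv hS
  have hAq := sum_P_rpow_pos v hv hS q
  have hA2 := sum_P_rpow_pos v hv hS 2
  -- key : ∑ P^2 ≤ (∑ P^q)^(1/(q-1))
  have key : ∑ i, P v i ^ (2:ℝ) ≤ (∑ i, P v i ^ q) ^ (1/(q-1)) := by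
    rcases eq_or_lt_of_le hq2 with h2 | hlt
    · subst h2; norm_num
    · have hq2ne : q - 2 ≠ 0 := by intro h; apply hlt.ne; linarith
      have hq1ne : q - 1 ≠ 0 := by intro h; apply hq.ne'; linarith
      have hconj : Real.HolderConjugate (q-1) ((q-1)/(q-2)) := by
        rw [Real.holderConjugate_iff]; constructor
        · linarith
        · rw [inv_div]
          field_simp
          ring
      have H := Real.inner_le_Lp_mul_Lq_of_nonneg Finset.univ hconj
        (f := fun i => P v i ^ (q/(q-1))) (g := fun i => P v i ^ ((q-2)/(q-1)))
        (fun i _ => Real.rpow_nonneg (hP0 i) _) (fun i _ => Real.rpow_nonneg (hP0 i) _)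
      have e1 : ∀ i, P v i ^ (q/(q-1)) * P v i ^ ((q-2)/(q-1)) = P v i ^ (2:ℝ) := by
        intro i
        rw [← Real.rpow_add' (hP0 i) (by rw [← add_div]; exact div_ne_zero (by intro h; linarith) hq1ne)]
        congr 1
        field_simp
        ring
      have e2 : ∀ i, (P v i ^ (q/(q-1))) ^ (q-1) = P v i ^ q := by
        intro i
        rw [← Real.rpow_mul (hP0 i)]
        congr 1
        field_simp
      have e3 : ∀ i, (P v i ^ ((q-2)/(q-1))) ^ ((q-1)/(q-2)) = P v i ^ (1:ℝ) := by
        intro i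
        rw [← Real.rpow_mul (hP0 i)]
        congr 1
        field_simp
      simp only [e1, e2, e3] at H
      calc ∑ i, P v i ^ (2:ℝ) ≤ (∑ i, P v i ^ q) ^ (1/(q-1)) *
            (∑ i, P v i ^ (1:ℝ)) ^ (1/((q-1)/(q-2))) := H
        _ = (∑ i, P v i ^ q) ^ (1/(q-1)) := by
            simp only [Real.rpow_one]
            rw [P_sum v hv hS, Real.one_rpow, mul_one]
  have hlog : Real.log (∑ i, P v i ^ (2:ℝ)) ≤ (1/(q-1)) * Real.log (∑ i, P v i ^ q) := by
    calc Real.log (∑ i, P v i ^ (2:ℝ)) ≤ Real.log ((∑ i, P v i ^ q) ^ ((1:ℝ)/(q-1))) :=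
          Real.log_le_log hA2 key
      _ = _ := Real.log_rpow hAq _
  rw [renyiH_eq v hv hS, renyiH_eq v hv hS]
  set L1 := Real.log (∑ i, P v i ^ q)
  set L2 := Real.log (∑ i, P v i ^ (2:ℝ))
  have h1q : (1:ℝ) - q ≠ 0 := by intro h; apply hq.ne'; linarith
  have hq1ne : q - 1 ≠ 0 := by intro h; apply hq.ne'; linarith
  have hrw : (1:ℝ)/(1-q) * L1 = -(1/(q-1) * L1) := by
    rw [show (1:ℝ)-q = -(q-1) by ring, div_neg, neg_mul]
  have hrw2 : (1:ℝ)/(1-(2:ℝ)) * L2 = -L2 := by norm_num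
  rw [hrw, hrw2]
  linarith


lemma sum_sq_pos : 0 < ∑ i, v i ^ 2 := by
  obtain ⟨i, hi⟩ : ∃ i, 0 < v i := by
    by_contra h
    push_neg at h
    have : ∑ i, v i ≤ 0 := Finset.sum_nonpos fun i _ => h i
    linarith
  calc (0:ℝ) < v i ^ 2 := by positivity
    _ ≤ _ := Finset.single_le_sum (fun j _ => sq_nonneg (v j)) (Finset.mem_univ i)

lemma renyi_two_formula :
    renyiH 2 v = 2 * Real.log (∑ i, v i) - Real.log (∑ i, v i ^ 2) := by
  have hsq := sum_sq_pos v hv hS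
  unfold renyiH
  have e1 : ∀ i, (v i / ∑ j, v j) ^ (2:ℝ) = v i ^ 2 / (∑ j, v j) ^ 2 := by
    intro i
    rw [show (2:ℝ) = ((2:ℕ):ℝ) by norm_num, Real.rpow_natCast, div_pow]
  simp only [e1, ← Finset.sum_div]
  rw [Real.log_div hsq.ne' (pow_ne_zero _ hS.ne'), Real.log_pow]
  push_cast
  ring

end Prob

/-- the combined scalar inequality -/
lemma main_scalar {ι κ : Type*} [Fintype ι] [Fintype κ] (a : ι → ℝ) (b : κ → ℝ)
    (ha : ∀ i, 0 ≤ a i) (hb : ∀ i, 0 ≤ b i)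
    (hSa : 0 < ∑ i, a i) (hSb : 0 < ∑ i, b i)
    (hT : ∑ i, a i ^ 2 = ∑ i, b i ^ 2) {q : ℝ} (hq : 1 < q) :
    min (q / (q - 1)) 2 * Real.log ((∑ i, a i) / ∑ i, b i)
      + min (q / (2 * (q - 1))) (2 * (q - 1) / q) * renyiH q b ≤ renyiH q a := by
  have hq1 : (0:ℝ) < q - 1 := by linarith
  have hq0 : (0:ℝ) < q := by linarith
  have hLN : Real.log ((∑ i, a i) / ∑ i, b i) = Real.log (∑ i, a i) - Real.log (∑ i, b i) :=
    Real.log_div hSa.ne' hSb.ne'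
  have h2a := renyi_two_formula a ha hSa
  have h2b := renyi_two_formula b hb hSb
  have hid : renyiH 2 a = renyiH 2 b + 2 * Real.log ((∑ i, a i) / ∑ i, b i) := by
    rw [h2a, h2b, hLN, hT]; ring
  rcases le_or_gt q 2 with hle | hlt
  · have m1 : min (q / (q - 1)) 2 = 2 := by
      apply min_eq_right
      rw [le_div_iff₀ hq1]; linarith
    have m2 : min (q / (2 * (q - 1))) (2 * (q - 1) / q) = 2 * (q - 1) / q := by
      apply min_eq_right
      rw [div_le_div_iff₀ hq0 (by linarith : (0:ℝ) < 2 * (q-1))]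
      nlinarith
    rw [m1, m2]
    have i1 := renyi_two_le a ha hSa hq hle
    have i2 := renyi_half2_le b hb hSb hq hle
    linarith
  · have m1 : min (q / (q - 1)) 2 = q / (q - 1) := by
      apply min_eq_left
      rw [div_le_iff₀ hq1]; linarith
    have m2 : min (q / (2 * (q - 1))) (2 * (q - 1) / q) = q / (2 * (q - 1)) := by
      apply min_eq_left
      rw [div_le_div_iff₀ (by linarith : (0:ℝ) < 2 * (q-1)) hq0]
      nlinarith
    rw [m1, m2]
    have i1 := renyi_ge2_a a ha hSa hlt.le
    have i2 := renyi_ge2_b b hb hSb hlt.le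
    have hcoef : (0:ℝ) ≤ q / (2 * (q - 1)) := by positivity
    have i3 : q / (2 * (q - 1)) * renyiH q b ≤ q / (2 * (q - 1)) * renyiH 2 b :=
      mul_le_mul_of_nonneg_left i2 hcoef
    have halg : q / (2 * (q - 1)) * renyiH 2 a
        = q / (2 * (q - 1)) * renyiH 2 b + q / (q - 1) * Real.log ((∑ i, a i) / ∑ i, b i) := by
      rw [hid]
      field_simp
    linarith

section MatrixAux

variable {n : Type*} [Fintype n] [DecidableEq n]

lemma aux_trace_unitary_conj (U : Matrix.unitaryGroup n ℂ) (d : n → ℂ) :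
    ((U : Matrix n n ℂ) * Matrix.diagonal d * (star U : Matrix n n ℂ)).trace = ∑ i, d i := by
  rw [Matrix.trace_mul_cycle]
  have h : (star U : Matrix n n ℂ) * (U : Matrix n n ℂ) = 1 :=
    Matrix.UnitaryGroup.star_mul_self U
  rw [h, Matrix.one_mul, Matrix.trace_diagonal]

lemma aux_sv_nonneg (X : Matrix n n ℂ) (i : n) : 0 ≤ singularValues X i :=
  Real.sqrt_nonneg _

/-- sum of squared singular values is the entrywise square sum -/
lemma aux_sum_sv_sq (X : Matrix n n ℂ) :
    ∑ i, singularValues X i ^ 2 = ∑ p, ∑ q, Complex.normSq (X p q) := by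
  have hY := Matrix.posSemidef_self_mul_conjTranspose X
  have e1 : ∀ i, singularValues X i ^ 2 = hY.1.eigenvalues i := fun i =>
    Real.sq_sqrt (hY.eigenvalues_nonneg i)
  simp only [e1]
  have e2 : (∑ i, (hY.1.eigenvalues i : ℂ)) = (X * Xᴴ).trace := by
    conv_rhs => rw [hY.1.spectral_theorem, Unitary.conjStarAlgAut_apply]
    rw [aux_trace_unitary_conj]
    simp
  have e3 : ∑ i, hY.1.eigenvalues i = (X * Xᴴ).trace.re := by
    rw [← e2, Complex.re_sum]
    simp
  rw [e3]
  unfold Matrix.trace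
  rw [Complex.re_sum]
  apply Finset.sum_congr rfl
  intro p _
  rw [Matrix.diag, Matrix.mul_apply, Complex.re_sum]
  apply Finset.sum_congr rfl
  intro q _
  rw [Matrix.conjTranspose_apply, RCLike.star_def, Complex.mul_conj]
  simp

open scoped MatrixOrder in
/-- for PSD matrices, the sum of singular values is the (real part of the) trace -/
lemma aux_sum_sv_psd (X : Matrix n n ℂ) (hX : X.PosSemidef) :
    ∑ i, singularValues X i = X.trace.re := by
  have hY := Matrix.posSemidef_self_mul_conjTranspose X
  have hsq : X ^ 2 = X * Xᴴ := by rw [hX.1.eq, pow_two] -- check name: IsHermitian gives Xᴴ = X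
  have hXeq : X = CFC.sqrt (X * Xᴴ) :=
    ((CFC.sqrt_eq_iff _ _ hY.nonneg hX.nonneg).mpr (by rw [← pow_two, hsq])).symm
  have : (CFC.sqrt (X * Xᴴ)).trace = ∑ i, ((Real.sqrt (hY.1.eigenvalues i) : ℂ)) := by
    rw [CFC.sqrt_eq_cfc, cfc_nnreal_eq_real _ (X * Xᴴ) hY.nonneg, hY.1.cfc_eq]
    unfold Matrix.IsHermitian.cfc
    rw [Unitary.conjStarAlgAut_apply, aux_trace_unitary_conj]
    simp [Function.comp_def, Real.coe_sqrt, Real.coe_toNNReal',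
      fun i => max_eq_left (hY.eigenvalues_nonneg i)]
  rw [show X.trace = (CFC.sqrt (X * Xᴴ)).trace by rw [← hXeq], this, Complex.re_sum]
  unfold singularValues
  simp

end MatrixAux

section Choi

variable {N : ℕ} (Φ : Matrix (Fin N) (Fin N) ℂ →ₗ[ℂ] Matrix (Fin N) (Fin N) ℂ)

lemma aux_mul_std_mul {n : Type*} [Fintype n] [DecidableEq n]
    (B C : Matrix n n ℂ) (a b c d : n) :
    (B * Matrix.single a b (1:ℂ) * C) c d = B c a * C b d := by
  rw [Matrix.mul_assoc, Matrix.mul_apply]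
  have h : ∀ x, (Matrix.single a b (1:ℂ) * C) x d = if a = x then C b d else 0 := by
    intro x
    rw [Matrix.mul_apply]
    by_cases hx : a = x
    · subst hx; simp [Matrix.single, ite_and]
    · simp [Matrix.single, ite_and, hx]
  simp only [h, mul_ite, mul_zero]
  simp [Finset.sum_ite_eq]

lemma choi_apply {k : ℕ} (A : Fin k → Matrix (Fin N) (Fin N) ℂ)
    (hrep : ∀ ρ, Φ ρ = ∑ i, A i * ρ * (A i)ᴴ) (p q : Fin N × Fin N) :
    choiMatrix Φ p q = ∑ i, A i p.1 p.2 * star (A i q.1 q.2) := by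
  unfold choiMatrix
  rw [hrep]
  rw [Matrix.sum_apply]
  apply Finset.sum_congr rfl
  intro i _
  rw [aux_mul_std_mul, Matrix.conjTranspose_apply]

lemma choi_posSemidef {k : ℕ} (A : Fin k → Matrix (Fin N) (Fin N) ℂ)
    (hrep : ∀ ρ, Φ ρ = ∑ i, A i * ρ * (A i)ᴴ) :
    (choiMatrix Φ).PosSemidef := by
  rw [Matrix.posSemidef_iff_dotProduct_mulVec]; constructor
  · ext p q
    rw [Matrix.conjTranspose_apply, choi_apply Φ A hrep, choi_apply Φ A hrep]
    rw [star_sum]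
    apply Finset.sum_congr rfl
    intro i _
    simp [mul_comm]
  · intro x
    set c : Fin k → ℂ := fun i => ∑ p, star (x p) * A i p.1 p.2 with hc
    have h : dotProduct (star x) ((choiMatrix Φ) *ᵥ x) = ∑ i, c i * star (c i) := by
      have e1 : ∀ i, c i * star (c i)
          = ∑ p, ∑ r, star (x p) * A i p.1 p.2 * (x r * star (A i r.1 r.2)) := by
        intro i
        rw [hc]
        simp only [star_sum, star_mul', star_star]
        rw [Finset.sum_mul_sum]
      simp only [e1]
      rw [Finset.sum_comm]
      unfold dotProduct Matrix.mulVec dotProduct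
      apply Finset.sum_congr rfl; intro p _
      rw [Finset.sum_comm]
      simp only [choi_apply Φ A hrep, Pi.star_apply, Finset.mul_sum, Finset.sum_mul]
      apply Finset.sum_congr rfl; intro r _
      apply Finset.sum_congr rfl; intro i _
      ring
    rw [h]
    exact Finset.sum_nonneg fun i _ => mul_star_self_nonneg _

lemma choi_trace {k : ℕ} (A : Fin k → Matrix (Fin N) (Fin N) ℂ)
    (hrep : ∀ ρ, Φ ρ = ∑ i, A i * ρ * (A i)ᴴ)
    (hsum : ∑ i, (A i)ᴴ * A i = 1) :
    (choiMatrix Φ).trace = (N : ℂ) := by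
  have step1 : (choiMatrix Φ).trace = ∑ i, ((A i)ᴴ * A i).trace := by
    unfold Matrix.trace Matrix.diag
    simp only [choi_apply Φ A hrep]
    rw [Finset.sum_comm]
    apply Finset.sum_congr rfl
    intro i _
    rw [Fintype.sum_prod_type]
    rw [Finset.sum_comm]
    apply Finset.sum_congr rfl
    intro b _
    apply Finset.sum_congr rfl
    intro a _
    simp [Matrix.conjTranspose_apply, mul_comm]
  rw [step1, ← Matrix.trace_sum, hsum, Matrix.trace_one]
  simp

lemma entry_sum_eq :
    ∑ p, ∑ q, Complex.normSq (choiMatrix Φ p q)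
      = ∑ p, ∑ q, Complex.normSq (superMatrix Φ p q) := by
  rw [← Fintype.sum_prod_type' (f := fun p q => Complex.normSq (choiMatrix Φ p q)),
    ← Fintype.sum_prod_type' (f := fun p q => Complex.normSq (superMatrix Φ p q))]
  apply Fintype.sum_equiv
    (⟨fun z => ((z.1.1, z.2.1), (z.1.2, z.2.2)), fun z => ((z.1.1, z.2.1), (z.1.2, z.2.2)),
      fun z => rfl, fun z => rfl⟩ :
      ((Fin N × Fin N) × (Fin N × Fin N)) ≃ ((Fin N × Fin N) × (Fin N × Fin N)))
  intro z
  rfl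

end Choi


lemma aux_pos_sum_of_sq {ι : Type*} [Fintype ι] (w : ι → ℝ) (hw : ∀ i, 0 ≤ w i)
    (h : 0 < ∑ i, w i ^ 2) : 0 < ∑ i, w i := by
  rcases (Finset.sum_nonneg (fun i (_ : i ∈ Finset.univ) => hw i)).lt_or_eq with hlt | heq
  · exact hlt
  · exfalso
    have hall := Finset.sum_eq_zero_iff_of_nonneg (fun i (_ : i ∈ Finset.univ) => hw i) |>.mp heq.symm
    have : ∑ i, w i ^ 2 = 0 := Finset.sum_eq_zero fun i hi => by rw [hall i hi]; ring
    linarith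

theorem renyi_map_entropy_lower_bound {N : ℕ} (hN : 0 < N)
    (Φ : Matrix (Fin N) (Fin N) ℂ →ₗ[ℂ] Matrix (Fin N) (Fin N) ℂ) (hΦ : IsCPTP Φ) (q : ℝ) (hq : 1 < q) :
    min (q / (q - 1)) 2 * Real.log ((N : ℝ) / ∑ i, singularValues (superMatrix Φ) i)
        + min (q / (2 * (q - 1))) (2 * (q - 1) / q)
          * renyiH q (singularValues (superMatrix Φ))
      ≤ renyiH q (singularValues (choiMatrix Φ)) := by
  obtain ⟨k, A, hrep, hsum⟩ := hΦ
  have hPSD := choi_posSemidef Φ A hrep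
  have hsv_a : ∀ i, 0 ≤ singularValues (choiMatrix Φ) i := aux_sv_nonneg _
  have hsv_b : ∀ i, 0 ≤ singularValues (superMatrix Φ) i := aux_sv_nonneg _
  have hSa : ∑ i, singularValues (choiMatrix Φ) i = (N : ℝ) := by
    rw [aux_sum_sv_psd _ hPSD, choi_trace Φ A hrep hsum]
    simp
  have hSa_pos : 0 < ∑ i, singularValues (choiMatrix Φ) i := by
    rw [hSa]; exact_mod_cast hN
  have hT : ∑ i, singularValues (choiMatrix Φ) i ^ 2
      = ∑ i, singularValues (superMatrix Φ) i ^ 2 := by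
    rw [aux_sum_sv_sq, aux_sum_sv_sq, entry_sum_eq]
  have hSb_pos : 0 < ∑ i, singularValues (superMatrix Φ) i := by
    apply aux_pos_sum_of_sq _ hsv_b
    rw [← hT]
    exact sum_sq_pos _ hsv_a hSa_pos
  have H := main_scalar (singularValues (choiMatrix Φ)) (singularValues (superMatrix Φ))
    hsv_a hsv_b hSa_pos hSb_pos hT hq
  rw [hSa] at H
  exact H

end
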